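/- Let 𝒜 be a finite nonempty set, μ a translation invariant probability measure on 𝒜^(ℤ^d), (A, G) a tiling of ℤ^d with A partitioned into nonempty sets A_1, …, A_N, A_{<k} = ∪_{i<k} A_i, and G_n = {Σ g_i ê_i : |g_i| ≤ n}. Then for each k and all integers n > N' ≥ 1, S( A_k + G_n | A_{<k} + G_n ) ≤ (|G_n| − |G_{n−N'}|) · |A_k| · log|𝒜| + |G_{n−N'}| · S( A_k | (A_k + G_{N'}^−) ∪ (A_{<k} + G_{N'}) ), where G_{N'}^− = {g ∈ G_{N'} : g < 0} in the lexicographic order on G. -/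

import Mathlib

open MeasureTheory Real Filter Pointwise

/-- The lattice `ℤ^d`. -/
abbrev LatZ (d : ℕ) := Fin d → ℤ

/-- Probability of the cylinder set determined by the configuration `x` on the finite set `Λ`. -/
noncomputable def cylProb {d : ℕ} {𝒜 : Type*} [MeasurableSpace 𝒜]
    (μ : Measure (LatZ d → 𝒜)) (Λ : Finset (LatZ d)) (x : Λ → 𝒜) : ℝ :=
  (μ {ω | ∀ v : Λ, ω v.1 = x v}).toReal

/-- The entropy `S(Λ)` of a finite set of sites `Λ` with respect to `μ`. -/
noncomputable def entS {d : ℕ} {𝒜 : Type*} [Fintype 𝒜] [MeasurableSpace 𝒜]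
    (μ : Measure (LatZ d → 𝒜)) (Λ : Finset (LatZ d)) : ℝ :=
  -∑ x : (Λ → 𝒜), cylProb μ Λ x * Real.log (cylProb μ Λ x)

/-- The conditional entropy `S(Λ | Λ')` (terms with zero probability vanish since
`Real.log 0 = 0` and `0 * log 0 = 0`). -/
noncomputable def condEnt {d : ℕ} {𝒜 : Type*} [Fintype 𝒜] [MeasurableSpace 𝒜]
    (μ : Measure (LatZ d → 𝒜)) (Λ Λ' : Finset (LatZ d)) : ℝ :=
  -∑ x : ((Λ ∪ Λ' : Finset (LatZ d)) → 𝒜),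
      cylProb μ (Λ ∪ Λ') x *
        Real.log (cylProb μ (Λ ∪ Λ') x /
          cylProb μ Λ' (fun v => x ⟨v.1, Finset.mem_union_right Λ v.2⟩))

/-- The shift map `σ_v`, `(σ_v x)(u) = x(u + v)`. -/
def shiftMap {d : ℕ} {𝒜 : Type*} (v : LatZ d) (ω : LatZ d → 𝒜) : LatZ d → 𝒜 :=
  fun u => ω (u + v)

/-- `μ` is translation invariant if it is preserved by every shift `σ_v`. -/
def TransInv {d : ℕ} {𝒜 : Type*} [MeasurableSpace 𝒜] (μ : Measure (LatZ d → 𝒜)) : Prop :=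
  ∀ v : LatZ d, μ.map (shiftMap v) = μ

/-- The box `V_n = {v ∈ ℤ^d : |v_i| ≤ n ∀ i}` (also used as coordinate box `G_n`). -/
noncomputable def Vbox (d n : ℕ) : Finset (LatZ d) :=
  Fintype.piFinset fun _ => Finset.Icc (-(n : ℤ)) (n : ℤ)

open Classical in
/-- The finite set `Λ' ∩ V_n` for a (possibly infinite) `Λ' ⊆ ℤ^d`. -/
noncomputable def interBox (d : ℕ) (Λ' : Set (LatZ d)) (n : ℕ) : Finset (LatZ d) :=
  (Vbox d n).filter (· ∈ Λ')

/-- The lattice point `Σ_i c_i ê_i` with coordinates `c` in the basis `e`. -/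
def latt {d : ℕ} (e : Fin d → LatZ d) (c : Fin d → ℤ) : LatZ d :=
  ∑ i, c i • e i

/-- Lexicographic comparison of coordinate vectors. -/
def lexLt {d : ℕ} (c c' : Fin d → ℤ) : Prop :=
  ∃ i, c i < c' i ∧ ∀ j, j < i → c j = c' j

/-- The subgroup `G` generated by `e`, as a set. -/
def Gfull {d : ℕ} (e : Fin d → LatZ d) : Set (LatZ d) :=
  Set.range (latt e)

/-- `G^- = {g ∈ G : g < 0}` in the lexicographic order on `G`. -/
def Gneg {d : ℕ} (e : Fin d → LatZ d) : Set (LatZ d) :=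
  {g | ∃ c, lexLt c 0 ∧ g = latt e c}

/-- The finite subset `G_n = {Σ g_i ê_i : |g_i| ≤ n}` of `G`. -/
noncomputable def GboxF {d : ℕ} (e : Fin d → LatZ d) (n : ℕ) : Finset (LatZ d) :=
  (Vbox d n).image (latt e)

/-- A tiling `(A, G)` of `ℤ^d`, with `G` the subgroup generated by the
`ℤ`-linearly independent family `e`. -/
structure IsTiling {d : ℕ} (A : Finset (LatZ d)) (e : Fin d → LatZ d) : Prop where
  zero_mem : (0 : LatZ d) ∈ A
  indep : LinearIndependent ℤ e
  cover : ∀ v : LatZ d, ∃ a ∈ A, ∃ c : Fin d → ℤ, v = a + latt e c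
  disj : ∀ c c' : Fin d → ℤ, latt e c ≠ latt e c' →
    Disjoint (A.image (· + latt e c)) (A.image (· + latt e c'))

/-- The unit cube `U_d`. -/
noncomputable def Ud (d : ℕ) : Finset (LatZ d) :=
  Fintype.piFinset fun _ => Finset.Icc (-1 : ℤ) 1

open Classical in
/-- The boundary `∂Λ = Λ ∩ (U_d + Λ^C)`. -/
noncomputable def bdry {d : ℕ} (Λ : Finset (LatZ d)) : Finset (LatZ d) :=
  Λ.filter (fun v => v ∈ (↑(Ud d) : Set (LatZ d)) + (↑Λ : Set (LatZ d))ᶜ)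


set_option linter.unusedSectionVars false
open Classical

section Lemmas

variable {d : ℕ} {𝒜 : Type*} [Fintype 𝒜] [MeasurableSpace 𝒜] [MeasurableSingletonClass 𝒜]

/-- The cylinder set. -/
def cylSet (Λ : Finset (LatZ d)) (x : Λ → 𝒜) : Set (LatZ d → 𝒜) :=
  {ω | ∀ v : Λ, ω v.1 = x v}

lemma measurableSet_cylSet (Λ : Finset (LatZ d)) (x : Λ → 𝒜) :
    MeasurableSet (cylSet Λ x) := by
  have h : cylSet Λ x = ⋂ v : Λ, (fun ω : LatZ d → 𝒜 => ω v.1) ⁻¹' {x v} := by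
    ext ω; simp [cylSet]
  rw [h]
  exact MeasurableSet.iInter fun v =>
    (measurable_pi_apply v.1) (measurableSet_singleton _)

lemma cylProb_def (μ : Measure (LatZ d → 𝒜)) (Λ : Finset (LatZ d)) (x : Λ → 𝒜) :
    cylProb μ Λ x = (μ (cylSet Λ x)).toReal := rfl

lemma cylProb_nonneg (μ : Measure (LatZ d → 𝒜)) (Λ : Finset (LatZ d)) (x : Λ → 𝒜) :
    0 ≤ cylProb μ Λ x := ENNReal.toReal_nonneg

/-- Restriction of a configuration. -/
def res {Λ M : Finset (LatZ d)} (h : Λ ⊆ M) (z : M → 𝒜) : Λ → 𝒜 :=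
  fun v => z ⟨v.1, h v.2⟩

lemma cylProb_le_res (μ : Measure (LatZ d → 𝒜)) [IsProbabilityMeasure μ]
    {Λ M : Finset (LatZ d)} (h : Λ ⊆ M) (z : M → 𝒜) :
    cylProb μ M z ≤ cylProb μ Λ (res h z) := by
  apply ENNReal.toReal_mono (measure_ne_top μ _)
  apply measure_mono
  intro ω hω v
  exact hω ⟨v.1, h v.2⟩

lemma sum_fiber_cylProb (μ : Measure (LatZ d → 𝒜)) [IsProbabilityMeasure μ]
    {Λ M : Finset (LatZ d)} (h : Λ ⊆ M) (y : Λ → 𝒜) :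
    ∑ z ∈ Finset.univ.filter (fun z : M → 𝒜 => res h z = y), cylProb μ M z
      = cylProb μ Λ y := by
  have hset : cylSet Λ y =
      ⋃ z ∈ Finset.univ.filter (fun z : M → 𝒜 => res h z = y), cylSet M z := by
    ext ω
    simp only [Set.mem_iUnion, Finset.mem_filter, Finset.mem_univ, true_and]
    constructor
    · intro hω
      refine ⟨fun v => ω v.1, ?_, fun v => rfl⟩
      funext v; exact hω v
    · rintro ⟨z, hz, hωz⟩ v
      rw [← hz]; exact hωz ⟨v.1, h v.2⟩
  have hdisj : (Finset.univ.filter (fun z : M → 𝒜 => res h z = y) : Set (M → 𝒜)).PairwiseDisjoint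
      (fun z => cylSet M z) := by
    intro a _ b _ hab
    apply Set.disjoint_left.2
    intro ω hωa hωb
    apply hab
    funext v
    rw [← hωa v, ← hωb v]
  rw [cylProb_def, hset, measure_biUnion_finset hdisj (fun z _ => measurableSet_cylSet M z)]
  rw [ENNReal.toReal_sum (fun z _ => measure_ne_top μ _)]
  rfl

lemma sum_cylProb (μ : Measure (LatZ d → 𝒜)) [IsProbabilityMeasure μ]
    (Λ : Finset (LatZ d)) :
    ∑ z : Λ → 𝒜, cylProb μ Λ z = 1 := by
  have h : (∅ : Finset (LatZ d)) ⊆ Λ := Finset.empty_subset _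
  set y : ((∅ : Finset (LatZ d)) : Type _) → 𝒜 :=
    fun v => absurd v.2 (Finset.notMem_empty _) with hy
  have hfib := sum_fiber_cylProb μ h y
  have hfil : Finset.univ.filter (fun z : Λ → 𝒜 => res h z = y) = Finset.univ := by
    apply Finset.filter_true_of_mem
    intro z _
    funext v; exact absurd v.2 (Finset.notMem_empty _)
  have hone : cylProb μ (∅ : Finset (LatZ d)) y = 1 := by
    have : cylSet (∅ : Finset (LatZ d)) y = Set.univ :=
      Set.eq_univ_iff_forall.2 (fun ω v => absurd v.2 (Finset.notMem_empty _))
    rw [cylProb_def, this, measure_univ, ENNReal.toReal_one]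
  rw [hfil] at hfib
  rw [hfib, hone]

end Lemmas
section Lemmas2
variable {d : ℕ} {𝒜 : Type*} [Fintype 𝒜] [MeasurableSpace 𝒜] [MeasurableSingletonClass 𝒜]

lemma gibbs {ι : Type*} [Fintype ι] (p q : ι → ℝ) (hp : ∀ i, 0 ≤ p i) (hq : ∀ i, 0 ≤ q i)
    (hpq : ∀ i, p i ≠ 0 → q i ≠ 0) :
    ∑ i, p i * Real.log (q i / p i) ≤ ∑ i, q i - ∑ i, p i := by
  rw [← Finset.sum_sub_distrib]
  apply Finset.sum_le_sum
  intro i _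
  rcases eq_or_ne (p i) 0 with h | h
  · simp [h, hq i]
  · have hp' : 0 < p i := (hp i).lt_of_ne (Ne.symm h)
    have hq' : 0 < q i := (hq i).lt_of_ne (Ne.symm (hpq i h))
    have hlog := Real.log_le_sub_one_of_pos (div_pos hq' hp')
    have h2 : p i * Real.log (q i / p i) ≤ p i * (q i / p i - 1) := by
      exact mul_le_mul_of_nonneg_left hlog hp'.le
    calc p i * Real.log (q i / p i) ≤ p i * (q i / p i - 1) := h2
      _ = q i - p i := by field_simp

lemma cylProb_ne_zero_res (μ : Measure (LatZ d → 𝒜)) [IsProbabilityMeasure μ]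
    {Λ M : Finset (LatZ d)} (h : Λ ⊆ M) (z : M → 𝒜) (hz : cylProb μ M z ≠ 0) :
    cylProb μ Λ (res h z) ≠ 0 := by
  intro h0
  exact hz (le_antisymm (h0 ▸ cylProb_le_res μ h z) (cylProb_nonneg μ M z))

lemma mul_log_div_eq {p q : ℝ} (hpq : p ≠ 0 → q ≠ 0) :
    p * Real.log (p / q) = p * Real.log p - p * Real.log q := by
  rcases eq_or_ne p 0 with h | h
  · simp [h]
  · rw [Real.log_div h (hpq h)]; ring

lemma condEnt_eq (μ : Measure (LatZ d → 𝒜)) [IsProbabilityMeasure μ]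
    (Λ Λ' : Finset (LatZ d)) :
    condEnt μ Λ Λ' = entS μ (Λ ∪ Λ') - entS μ Λ' := by
  have hsub : Λ' ⊆ Λ ∪ Λ' := Finset.subset_union_right
  have hrw : condEnt μ Λ Λ' = -∑ x : ((Λ ∪ Λ') : Finset (LatZ d)) → 𝒜,
      cylProb μ (Λ ∪ Λ') x *
        Real.log (cylProb μ (Λ ∪ Λ') x / cylProb μ Λ' (res hsub x)) := rfl
  rw [hrw]
  have hterm : ∀ x : ((Λ ∪ Λ') : Finset (LatZ d)) → 𝒜,
      cylProb μ (Λ ∪ Λ') x *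
        Real.log (cylProb μ (Λ ∪ Λ') x / cylProb μ Λ' (res hsub x))
      = cylProb μ (Λ ∪ Λ') x * Real.log (cylProb μ (Λ ∪ Λ') x)
        - cylProb μ (Λ ∪ Λ') x * Real.log (cylProb μ Λ' (res hsub x)) :=
    fun x => mul_log_div_eq (cylProb_ne_zero_res μ hsub x)
  rw [Finset.sum_congr rfl (fun x _ => hterm x), Finset.sum_sub_distrib]
  have hB : ∑ x : ((Λ ∪ Λ') : Finset (LatZ d)) → 𝒜,
      cylProb μ (Λ ∪ Λ') x * Real.log (cylProb μ Λ' (res hsub x))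
      = ∑ y : Λ' → 𝒜, cylProb μ Λ' y * Real.log (cylProb μ Λ' y) := by
    rw [← Finset.sum_fiberwise Finset.univ (res hsub)
      (fun x => cylProb μ (Λ ∪ Λ') x * Real.log (cylProb μ Λ' (res hsub x)))]
    apply Finset.sum_congr rfl
    intro y _
    have hc : ∀ x ∈ Finset.univ.filter (fun x : ((Λ ∪ Λ') : Finset (LatZ d)) → 𝒜 => res hsub x = y),
        cylProb μ (Λ ∪ Λ') x * Real.log (cylProb μ Λ' (res hsub x))
        = cylProb μ (Λ ∪ Λ') x * Real.log (cylProb μ Λ' y) := by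
      intro x hx
      rw [(Finset.mem_filter.1 hx).2]
    rw [Finset.sum_congr rfl hc, ← Finset.sum_mul, sum_fiber_cylProb μ hsub y]
  rw [hB, entS, entS]; ring

end Lemmas2
section Lemmas3
variable {d : ℕ} {𝒜 : Type*} [Fintype 𝒜] [MeasurableSpace 𝒜] [MeasurableSingletonClass 𝒜]

lemma card_fiber {Λ M : Finset (LatZ d)} (h : Λ ⊆ M) (y : Λ → 𝒜) :
    (Finset.univ.filter (fun z : M → 𝒜 => res h z = y)).card
      = Fintype.card 𝒜 ^ (M.card - Λ.card) := by
  have key : (Finset.univ.filter (fun z : M → 𝒜 => res h z = y)).card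
      = Fintype.card (((M \ Λ : Finset (LatZ d)) : Type _) → 𝒜) := by
    rw [← Finset.card_univ]
    apply Finset.card_bij'
      (i := fun z _ => fun v : ((M \ Λ : Finset (LatZ d)) : Type _) =>
        z ⟨v.1, Finset.sdiff_subset v.2⟩)
      (j := fun w _ => fun v : (M : Type _) =>
        if hv : v.1 ∈ Λ then y ⟨v.1, hv⟩
        else w ⟨v.1, Finset.mem_sdiff.2 ⟨v.2, hv⟩⟩)
    · intro z hz
      exact Finset.mem_univ _
    · intro w hw
      simp only [Finset.mem_filter, Finset.mem_univ, true_and]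
      funext v
      simp only [res, dif_pos v.2]
    · intro z hz
      funext v
      by_cases hv : v.1 ∈ Λ
      · simp only [dif_pos hv]
        have := (Finset.mem_filter.1 hz).2
        exact (congrFun this ⟨v.1, hv⟩).symm
      · simp only [dif_neg hv]
    · intro w hw
      funext v
      rcases Finset.mem_sdiff.1 v.2 with ⟨hvM, hvΛ⟩
      simp only [dif_neg hvΛ]
  rw [key, Fintype.card_fun, Fintype.card_coe, Finset.card_sdiff_of_subset h]

lemma neg_mul_log_div {p q : ℝ} : -(p * Real.log (p / q)) = p * Real.log (q / p) := by
  rcases eq_or_ne p 0 with h | h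
  · simp [h]
  · rcases eq_or_ne q 0 with h' | h'
    · simp [h', Real.log_zero, zero_div, div_zero]
    · rw [Real.log_div h h', Real.log_div h' h]; ring

lemma condEnt_le_card [Nonempty 𝒜] (μ : Measure (LatZ d → 𝒜)) [IsProbabilityMeasure μ]
    (Λ Λ' : Finset (LatZ d)) :
    condEnt μ Λ Λ' ≤ (Λ.card : ℝ) * Real.log (Fintype.card 𝒜) := by
  classical
  set M := Λ ∪ Λ' with hM
  have hsub : Λ' ⊆ M := Finset.subset_union_right
  set m : ℕ := M.card - Λ'.card with hm
  set C : ℝ := (Fintype.card 𝒜 : ℝ) ^ m with hC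
  have hcardA : 0 < Fintype.card 𝒜 := Fintype.card_pos
  have hCpos : 0 < C := by positivity
  set P : (M → 𝒜) → ℝ := fun x => cylProb μ M x with hP
  set Q : (M → 𝒜) → ℝ := fun x => cylProb μ Λ' (res hsub x) with hQ
  have hrw : condEnt μ Λ Λ' = ∑ x : M → 𝒜, P x * Real.log (Q x / P x) := by
    rw [show condEnt μ Λ Λ' = -∑ x : M → 𝒜, P x * Real.log (P x / Q x) from rfl,
      ← Finset.sum_neg_distrib]
    exact Finset.sum_congr rfl fun x _ => neg_mul_log_div
  have hterm : ∀ x : M → 𝒜, P x * Real.log (Q x / P x)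
      = P x * Real.log ((Q x / C) / P x) + P x * Real.log C := by
    intro x
    rcases eq_or_ne (P x) 0 with h | h
    · simp [h]
    · have hQx : Q x ≠ 0 := cylProb_ne_zero_res μ hsub x h
      rw [Real.log_div (div_ne_zero hQx hCpos.ne') h, Real.log_div hQx hCpos.ne',
        Real.log_div hQx h]
      ring
  have hsumP : ∑ x : M → 𝒜, P x = 1 := sum_cylProb μ M
  have hsumQ : ∑ x : M → 𝒜, Q x / C = 1 := by
    have h1 : ∑ x : M → 𝒜, Q x = C := by
      have h2 : ∑ x : M → 𝒜, cylProb μ Λ' (res hsub x)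
          = ∑ y : Λ' → 𝒜, ∑ x ∈ Finset.univ.filter (fun x : M → 𝒜 => res hsub x = y),
              cylProb μ Λ' y := by
        rw [Finset.sum_fiberwise' Finset.univ (res hsub) (fun y => cylProb μ Λ' y)]
      rw [hQ]
      simp only [h2, Finset.sum_const, nsmul_eq_mul, card_fiber hsub]
      rw [← Finset.mul_sum, sum_cylProb μ Λ', mul_one, hC, hm, Nat.cast_pow]
    rw [← Finset.sum_div, h1, div_self hCpos.ne']
  have hgibbs : ∑ x : M → 𝒜, P x * Real.log ((Q x / C) / P x) ≤ 0 := by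
    have := gibbs P (fun x => Q x / C) (fun x => cylProb_nonneg μ M x)
      (fun x => div_nonneg (cylProb_nonneg μ Λ' _) hCpos.le)
      (fun x hx => div_ne_zero (cylProb_ne_zero_res μ hsub x hx) hCpos.ne')
    rw [hsumP, hsumQ] at this
    linarith
  have hlogC : Real.log C = (m : ℝ) * Real.log (Fintype.card 𝒜) := by
    rw [hC, Real.log_pow]
  have hmle : (m : ℝ) ≤ (Λ.card : ℝ) := by
    have h3 : M.card ≤ Λ.card + Λ'.card := by
      rw [hM]; exact Finset.card_union_le Λ Λ'
    have h4 : m ≤ Λ.card := by omega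
    exact_mod_cast h4
  calc condEnt μ Λ Λ' = ∑ x : M → 𝒜, P x * Real.log ((Q x / C) / P x)
        + ∑ x : M → 𝒜, P x * Real.log C := by
        rw [hrw, ← Finset.sum_add_distrib]
        exact Finset.sum_congr rfl fun x _ => hterm x
    _ ≤ 0 + ∑ x : M → 𝒜, P x * Real.log C := by linarith
    _ = Real.log C := by rw [zero_add, ← Finset.sum_mul, hsumP, one_mul]
    _ = (m : ℝ) * Real.log (Fintype.card 𝒜) := hlogC
    _ ≤ (Λ.card : ℝ) * Real.log (Fintype.card 𝒜) := by
        apply mul_le_mul_of_nonneg_right hmle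
        apply Real.log_natCast_nonneg

end Lemmas3
section Lemmas4
variable {d : ℕ} {𝒜 : Type*} [Fintype 𝒜] [MeasurableSpace 𝒜] [MeasurableSingletonClass 𝒜]

lemma sum_fiber_pair (μ : Measure (LatZ d → 𝒜)) [IsProbabilityMeasure μ]
    {Λ Λ' Λ'' : Finset (LatZ d)} (h12 : Λ' ⊆ Λ'') (hd : Disjoint Λ Λ'')
    (hA : Λ'' ⊆ Λ ∪ Λ'') (hB : Λ ∪ Λ' ⊆ Λ ∪ Λ'') (hC' : Λ' ⊆ Λ ∪ Λ')
    (w : Λ'' → 𝒜) :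
    ∑ z ∈ Finset.univ.filter (fun z : ((Λ ∪ Λ'' : Finset (LatZ d))) → 𝒜 => res hA z = w),
        cylProb μ (Λ ∪ Λ') (res hB z)
      = cylProb μ Λ' (res h12 w) := by
  rw [← sum_fiber_cylProb μ hC' (res h12 w)]
  apply Finset.sum_bij'
    (i := fun z _ => res hB z)
    (j := fun x _ => fun v : ((Λ ∪ Λ'' : Finset (LatZ d)) : Type _) =>
      if hv : v.1 ∈ Λ then x ⟨v.1, Finset.mem_union_left Λ' hv⟩
      else w ⟨v.1, (Finset.mem_union.1 v.2).resolve_left hv⟩)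
  -- hi : i maps into target filter
  · intro z hz
    simp only [Finset.mem_filter, Finset.mem_univ, true_and] at hz ⊢
    funext v
    have := congrFun hz ⟨v.1, h12 v.2⟩
    exact this
  -- hj : j maps into source filter
  · intro x hx
    simp only [Finset.mem_filter, Finset.mem_univ, true_and]
    funext v
    have hvΛ : v.1 ∉ Λ := fun hvΛ => (Finset.disjoint_left.1 hd) hvΛ v.2
    simp only [res, dif_neg hvΛ]
  -- left inverse : j (i z) = z
  · intro z hz
    simp only [Finset.mem_filter, Finset.mem_univ, true_and] at hz
    funext v
    by_cases hv : v.1 ∈ Λ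
    · simp only [res, dif_pos hv]
    · simp only [res, dif_neg hv]
      exact (congrFun hz ⟨v.1, (Finset.mem_union.1 v.2).resolve_left hv⟩).symm
  -- right inverse : i (j x) = x
  · intro x hx
    simp only [Finset.mem_filter, Finset.mem_univ, true_and] at hx
    funext v
    by_cases hv : v.1 ∈ Λ
    · simp only [res, dif_pos hv]
    · have hvΛ' : v.1 ∈ Λ' := (Finset.mem_union.1 v.2).resolve_left hv
      simp only [res, dif_neg hv]
      exact (congrFun hx ⟨v.1, hvΛ'⟩).symm
  -- values
  · intro z hz
    rfl

lemma condEnt_mono (μ : Measure (LatZ d → 𝒜)) [IsProbabilityMeasure μ]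
    {Λ Λ' Λ'' : Finset (LatZ d)} (h12 : Λ' ⊆ Λ'') (hd : Disjoint Λ Λ'') :
    condEnt μ Λ Λ'' ≤ condEnt μ Λ Λ' := by
  classical
  set M := Λ ∪ Λ'' with hM
  have hA : Λ'' ⊆ M := Finset.subset_union_right
  have hB : Λ ∪ Λ' ⊆ M := Finset.union_subset_union_right h12
  have hC : Λ' ⊆ M := h12.trans hA
  have hC' : Λ' ⊆ Λ ∪ Λ' := Finset.subset_union_right
  set p : (M → 𝒜) → ℝ := fun z => cylProb μ M z with hp
  set a : (M → 𝒜) → ℝ := fun z => cylProb μ Λ'' (res hA z) with ha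
  set b : (M → 𝒜) → ℝ := fun z => cylProb μ (Λ ∪ Λ') (res hB z) with hb
  set c : (M → 𝒜) → ℝ := fun z => cylProb μ Λ' (res hC z) with hc
  set q : (M → 𝒜) → ℝ := fun z => a z * b z / c z with hq
  -- c z = cylProb μ Λ' (res hC' (res hB z))  (definitionally)
  have hcomp : ∀ z : M → 𝒜, res hC z = res hC' (res hB z) := fun z => rfl
  have hcomp2 : ∀ z : M → 𝒜, res hC z = res h12 (res hA z) := fun z => rfl
  -- Step 1 : condEnt μ Λ Λ''
  have step1 : condEnt μ Λ Λ'' = -∑ z : M → 𝒜, p z * Real.log (p z / a z) := rfl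
  -- Step 2 : condEnt μ Λ Λ' lifted to M
  have step2 : condEnt μ Λ Λ' = -∑ z : M → 𝒜, p z * Real.log (b z / c z) := by
    have e1 : condEnt μ Λ Λ' = -∑ x : ((Λ ∪ Λ' : Finset (LatZ d))) → 𝒜,
        cylProb μ (Λ ∪ Λ') x *
          Real.log (cylProb μ (Λ ∪ Λ') x / cylProb μ Λ' (res hC' x)) := rfl
    rw [e1, neg_inj]
    rw [← Finset.sum_fiberwise Finset.univ (res hB)
      (fun z : M → 𝒜 => p z * Real.log (b z / c z))]
    apply Finset.sum_congr rfl
    intro x _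
    have hcc : ∀ z ∈ Finset.univ.filter (fun z : M → 𝒜 => res hB z = x),
        p z * Real.log (b z / c z)
        = p z * Real.log (cylProb μ (Λ ∪ Λ') x / cylProb μ Λ' (res hC' x)) := by
      intro z hz
      have hzx := (Finset.mem_filter.1 hz).2
      show p z * Real.log (cylProb μ (Λ ∪ Λ') (res hB z) /
        cylProb μ Λ' (res hC' (res hB z))) = _
      rw [hzx]
    rw [Finset.sum_congr rfl hcc, ← Finset.sum_mul, sum_fiber_cylProb μ hB x]
  -- nonvanishing chains
  have hbc : ∀ z : M → 𝒜, b z ≤ c z := by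
    intro z; exact cylProb_le_res μ hC' (res hB z)
  have hqz : ∀ z : M → 𝒜, p z ≠ 0 → q z ≠ 0 := by
    intro z hz
    have hA0 := cylProb_ne_zero_res μ hA z hz
    have hB0 := cylProb_ne_zero_res μ hB z hz
    have hC0 := cylProb_ne_zero_res μ hC z hz
    exact div_ne_zero (mul_ne_zero hA0 hB0) hC0
  -- termwise identity
  have log_identity : ∀ p a b c : ℝ, p ≠ 0 → a ≠ 0 → b ≠ 0 → c ≠ 0 →
      p * Real.log (p / a) - p * Real.log (b / c)
        = -(p * Real.log ((a * b / c) / p)) := by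
    intro p a b c hp ha hb hc
    rw [Real.log_div hp ha, Real.log_div hb hc,
      Real.log_div (div_ne_zero (mul_ne_zero ha hb) hc) hp,
      Real.log_div (mul_ne_zero ha hb) hc, Real.log_mul ha hb]
    ring
  have hterm : ∀ z : M → 𝒜, p z * Real.log (p z / a z) - p z * Real.log (b z / c z)
      = -(p z * Real.log (q z / p z)) := by
    intro z
    rcases eq_or_ne (p z) 0 with h0 | h0
    · simp [h0]
    · exact log_identity (p z) (a z) (b z) (c z) h0
        (cylProb_ne_zero_res μ hA z h0) (cylProb_ne_zero_res μ hB z h0)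
        (cylProb_ne_zero_res μ hC z h0)
  -- sum of q is at most 1
  have hsumq : ∑ z : M → 𝒜, q z ≤ 1 := by
    rw [← Finset.sum_fiberwise Finset.univ (res hA) q]
    have hbound : ∀ w : Λ'' → 𝒜,
        ∑ z ∈ Finset.univ.filter (fun z : M → 𝒜 => res hA z = w), q z
          ≤ cylProb μ Λ'' w := by
      intro w
      rcases eq_or_ne (cylProb μ Λ' (res h12 w)) 0 with h0 | h0
      · -- all terms vanish
        have : ∀ z ∈ Finset.univ.filter (fun z : M → 𝒜 => res hA z = w), q z = 0 := by
          intro z hz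
          have hzw := (Finset.mem_filter.1 hz).2
          have hcz : c z = 0 := by
            show cylProb μ Λ' (res h12 (res hA z)) = 0
            rw [hzw]; exact h0
          have hbz : b z = 0 := le_antisymm (hcz ▸ hbc z) (cylProb_nonneg μ _ _)
          rw [hq]; simp [hbz]
        rw [Finset.sum_congr rfl this]
        simp [cylProb_nonneg]
      · have heq : ∀ z ∈ Finset.univ.filter (fun z : M → 𝒜 => res hA z = w),
            q z = cylProb μ Λ'' w * b z / cylProb μ Λ' (res h12 w) := by
          intro z hz
          have hzw := (Finset.mem_filter.1 hz).2
          show cylProb μ Λ'' (res hA z) * b z / cylProb μ Λ' (res h12 (res hA z)) = _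
          rw [hzw]
        rw [Finset.sum_congr rfl heq]
        have : ∑ z ∈ Finset.univ.filter (fun z : M → 𝒜 => res hA z = w),
            cylProb μ Λ'' w * b z / cylProb μ Λ' (res h12 w)
            = cylProb μ Λ'' w * (∑ z ∈ Finset.univ.filter
                (fun z : M → 𝒜 => res hA z = w), b z) / cylProb μ Λ' (res h12 w) := by
          rw [Finset.mul_sum, Finset.sum_div]
        rw [this, hb, sum_fiber_pair μ h12 hd hA hB hC' w, mul_div_assoc,
          div_self h0, mul_one]
    calc ∑ w : Λ'' → 𝒜, ∑ z ∈ Finset.univ.filter (fun z : M → 𝒜 => res hA z = w), q z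
        ≤ ∑ w : Λ'' → 𝒜, cylProb μ Λ'' w := Finset.sum_le_sum fun w _ => hbound w
      _ = 1 := sum_cylProb μ Λ''
  -- Gibbs
  have hgibbs : ∑ z : M → 𝒜, p z * Real.log (q z / p z) ≤ 0 := by
    have := gibbs p q (fun z => cylProb_nonneg μ M z)
      (fun z => div_nonneg (mul_nonneg (cylProb_nonneg μ _ _) (cylProb_nonneg μ _ _))
        (cylProb_nonneg μ _ _)) hqz
    rw [sum_cylProb μ M] at this
    linarith
  -- conclude
  have key1 : condEnt μ Λ Λ' - condEnt μ Λ Λ''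
      = ∑ z : M → 𝒜, (p z * Real.log (p z / a z) - p z * Real.log (b z / c z)) := by
    rw [step1, step2, Finset.sum_sub_distrib]; ring
  have key2 : condEnt μ Λ Λ' - condEnt μ Λ Λ''
      = -∑ z : M → 𝒜, p z * Real.log (q z / p z) := by
    rw [key1, ← Finset.sum_neg_distrib]
    exact Finset.sum_congr rfl fun z _ => hterm z
  linarith [key2]
end Lemmas4
section Lemmas5
variable {d : ℕ} {𝒜 : Type*} [Fintype 𝒜] [MeasurableSpace 𝒜] [MeasurableSingletonClass 𝒜]

lemma mem_add_singleton_self {Λ : Finset (LatZ d)} {u : LatZ d} (hu : u ∈ Λ) (g : LatZ d) :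
    u + g ∈ Λ + ({g} : Finset (LatZ d)) :=
  Finset.add_mem_add hu (Finset.mem_singleton_self g)

lemma mem_add_singleton_sub {Λ : Finset (LatZ d)} {g v : LatZ d}
    (hv : v ∈ Λ + ({g} : Finset (LatZ d))) : v - g ∈ Λ := by
  rcases Finset.mem_add.1 hv with ⟨y, hy, z, hz, hyz⟩
  rcases Finset.mem_singleton.1 hz with rfl
  rw [← hyz]; simpa using hy

/-- Transport of configurations along a shift. -/
def shiftConf (g : LatZ d) (Λ : Finset (LatZ d)) :
    ((Λ + ({g} : Finset (LatZ d)) : Finset (LatZ d)) → 𝒜) ≃ (Λ → 𝒜) where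
  toFun x u := x ⟨u.1 + g, mem_add_singleton_self u.2 g⟩
  invFun y v := y ⟨v.1 - g, mem_add_singleton_sub v.2⟩
  left_inv x := funext fun v => congrArg x (Subtype.ext (sub_add_cancel v.1 g))
  right_inv y := funext fun u => congrArg y (Subtype.ext (add_sub_cancel_right u.1 g))

lemma measurable_shiftMap (g : LatZ d) : Measurable (shiftMap g : (LatZ d → 𝒜) → _) :=
  measurable_pi_lambda _ fun u => measurable_pi_apply (u + g)

lemma cylProb_shift (μ : Measure (LatZ d → 𝒜)) (hinv : TransInv μ)
    (Λ : Finset (LatZ d)) (g : LatZ d)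
    (x : (Λ + ({g} : Finset (LatZ d)) : Finset (LatZ d)) → 𝒜) :
    cylProb μ (Λ + ({g} : Finset (LatZ d))) x = cylProb μ Λ (shiftConf g Λ x) := by
  rw [cylProb_def, cylProb_def]
  congr 1
  conv_rhs => rw [← hinv g]
  rw [Measure.map_apply (measurable_shiftMap g) (measurableSet_cylSet Λ (shiftConf g Λ x))]
  congr 1
  ext ω
  constructor
  · intro hω u
    exact hω ⟨u.1 + g, mem_add_singleton_self u.2 g⟩
  · intro hω v
    have h1 : v.1 - g ∈ Λ := mem_add_singleton_sub v.2
    have hthis := hω ⟨v.1 - g, h1⟩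
    simp only [shiftMap, shiftConf, Equiv.coe_fn_mk] at hthis ⊢
    have h2 : v.1 - g + g = v.1 := sub_add_cancel v.1 g
    calc ω v.1 = ω (v.1 - g + g) := by rw [h2]
      _ = x ⟨v.1 - g + g, by rw [h2]; exact v.2⟩ := hthis
      _ = x v := congrArg x (Subtype.ext h2)

lemma entS_shift (μ : Measure (LatZ d → 𝒜)) (hinv : TransInv μ)
    (Λ : Finset (LatZ d)) (g : LatZ d) :
    entS μ (Λ + ({g} : Finset (LatZ d))) = entS μ Λ := by
  rw [entS, entS, neg_inj]
  rw [← Equiv.sum_comp (shiftConf g Λ (𝒜 := 𝒜))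
    (fun y => cylProb μ Λ y * Real.log (cylProb μ Λ y))]
  exact Finset.sum_congr rfl fun x _ => by rw [cylProb_shift μ hinv Λ g x]

lemma condEnt_shift (μ : Measure (LatZ d → 𝒜)) [IsProbabilityMeasure μ] (hinv : TransInv μ)
    (Λ Λ' : Finset (LatZ d)) (g : LatZ d) :
    condEnt μ (Λ + ({g} : Finset (LatZ d))) (Λ' + ({g} : Finset (LatZ d))) = condEnt μ Λ Λ' := by
  rw [condEnt_eq, condEnt_eq, ← Finset.union_add, entS_shift μ hinv, entS_shift μ hinv]

end Lemmas5
section Lemmas6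
variable {d : ℕ} {𝒜 : Type*} [Fintype 𝒜] [MeasurableSpace 𝒜] [MeasurableSingletonClass 𝒜]

lemma condEnt_empty (μ : Measure (LatZ d → 𝒜)) [IsProbabilityMeasure μ]
    (C : Finset (LatZ d)) : condEnt μ (∅ : Finset (LatZ d)) C = 0 := by
  rw [condEnt_eq, Finset.empty_union, sub_self]

lemma condEnt_union (μ : Measure (LatZ d → 𝒜)) [IsProbabilityMeasure μ]
    (Λ₁ Λ₂ C : Finset (LatZ d)) :
    condEnt μ (Λ₁ ∪ Λ₂) C = condEnt μ Λ₁ C + condEnt μ Λ₂ (C ∪ Λ₁) := by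
  rw [condEnt_eq, condEnt_eq, condEnt_eq]
  have h1 : Λ₂ ∪ (C ∪ Λ₁) = Λ₁ ∪ Λ₂ ∪ C := by
    ext v; simp only [Finset.mem_union]; tauto
  have h2 : C ∪ Λ₁ = Λ₁ ∪ C := Finset.union_comm _ _
  rw [h1, h2]; ring

lemma latt_add (e : Fin d → LatZ d) (c c' : Fin d → ℤ) :
    latt e (c + c') = latt e c + latt e c' := by
  rw [latt, latt, latt, ← Finset.sum_add_distrib]
  exact Finset.sum_congr rfl fun i _ => by rw [Pi.add_apply, add_smul]

lemma latt_inj {e : Fin d → LatZ d} (h : LinearIndependent ℤ e) :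
    Function.Injective (latt e) := by
  intro c c' hcc
  have h0 : latt e (c - c') = 0 := by
    rw [latt]
    have : ∑ i, (c - c') i • e i = ∑ i, c i • e i - ∑ i, c' i • e i := by
      rw [← Finset.sum_sub_distrib]
      exact Finset.sum_congr rfl fun i _ => by rw [Pi.sub_apply, sub_smul]
    rw [this]
    rw [show (∑ i, c i • e i) = latt e c from rfl, show (∑ i, c' i • e i) = latt e c' from rfl,
      hcc, sub_self]
  have := Fintype.linearIndependent_iff.1 h (c - c') h0
  funext i
  have := this i
  have : c i - c' i = 0 := this
  linarith
lemma mem_Vbox {n : ℕ} {c : LatZ d} :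
    c ∈ Vbox d n ↔ ∀ i, -(n : ℤ) ≤ c i ∧ c i ≤ (n : ℤ) := by
  rw [Vbox, Fintype.mem_piFinset]
  simp only [Finset.mem_Icc]

lemma Vbox_mono {n m : ℕ} (h : n ≤ m) : Vbox d n ⊆ Vbox d m := by
  intro c hc
  rw [mem_Vbox] at hc ⊢
  intro i
  have := hc i
  constructor <;> [linarith [Int.ofNat_le.2 h]; linarith [Int.ofNat_le.2 h]]

lemma Vbox_add {n N' : ℕ} (hN : N' ≤ n) {c h : LatZ d}
    (hc : c ∈ Vbox d (n - N')) (hh : h ∈ Vbox d N') : c + h ∈ Vbox d n := by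
  rw [mem_Vbox] at hc hh ⊢
  intro i
  have h1 := hc i; have h2 := hh i
  have hnn : ((n - N' : ℕ) : ℤ) = (n : ℤ) - (N' : ℤ) := by
    omega
  rw [hnn] at h1
  constructor <;> [simp only [Pi.add_apply]; simp only [Pi.add_apply]] <;> omega

lemma lexLt_trichotomy {c c' : Fin d → ℤ} (hne : c ≠ c') : lexLt c c' ∨ lexLt c' c := by
  classical
  have hS : (Finset.univ.filter (fun i => c i ≠ c' i)).Nonempty := by
    by_contra h
    rw [Finset.not_nonempty_iff_eq_empty, Finset.filter_eq_empty_iff] at h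
    exact hne (funext fun i => not_ne_iff.1 (h (Finset.mem_univ i)))
  set i := (Finset.univ.filter (fun i => c i ≠ c' i)).min' hS with hi
  have himem := (Finset.univ.filter (fun i => c i ≠ c' i)).min'_mem hS
  have hine : c i ≠ c' i := (Finset.mem_filter.1 himem).2
  have hmin : ∀ j, j < i → c j = c' j := by
    intro j hj
    by_contra hcj
    have : i ≤ j := Finset.min'_le _ j (Finset.mem_filter.2 ⟨Finset.mem_univ j, hcj⟩)
    exact absurd hj (not_lt.2 this)
  rcases lt_or_gt_of_ne hine with h | h
  · exact Or.inl ⟨i, h, hmin⟩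
  · exact Or.inr ⟨i, h, fun j hj => (hmin j hj).symm⟩

lemma lexLt_asymm {c c' : Fin d → ℤ} (h : lexLt c c') (h' : lexLt c' c) : False := by
  obtain ⟨i, hi, hji⟩ := h
  obtain ⟨i', hi', hji'⟩ := h'
  rcases lt_trichotomy i i' with hii | rfl | hii
  · have := hji' i hii; omega
  · omega
  · have := hji i' hii; omega

lemma lexLt_ne {c c' : Fin d → ℤ} (h : lexLt c c') : c ≠ c' := by
  rintro rfl
  exact lexLt_asymm h h

lemma lexLt_trans {a b c : Fin d → ℤ} (h1 : lexLt a b) (h2 : lexLt b c) : lexLt a c := by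
  obtain ⟨i, hi, hji⟩ := h1
  obtain ⟨i', hi', hji'⟩ := h2
  rcases lt_trichotomy i i' with hii | rfl | hii
  · exact ⟨i, by rw [hji' i hii] at hi; exact hi,
      fun j hj => (hji j hj).trans (hji' j (hj.trans hii))⟩
  · exact ⟨i, hi.trans hi', fun j hj => (hji j hj).trans (hji' j hj)⟩
  · exact ⟨i', by rw [← hji i' hii] at hi'; exact hi',
      fun j hj => (hji j (hj.trans hii)).trans (hji' j hj)⟩

lemma exists_lexLt_max : ∀ S : Finset (Fin d → ℤ), S.Nonempty →
    ∃ c ∈ S, ∀ c' ∈ S, c' ≠ c → lexLt c' c := by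
  classical
  intro S
  induction S using Finset.induction with
  | empty => intro h; exact absurd h (by simp)
  | @insert a S ha ih =>
    intro _
    rcases S.eq_empty_or_nonempty with rfl | hSne
    · exact ⟨a, Finset.mem_insert_self a _, fun c' hc' hne => by
        rcases Finset.mem_insert.1 hc' with rfl | h
        · exact absurd rfl hne
        · exact absurd h (Finset.notMem_empty c')⟩
    · obtain ⟨c, hcS, hcmax⟩ := ih hSne
      by_cases hac : a = c
      · subst hac
        exact ⟨a, Finset.mem_insert_self a _, fun c' hc' hne => by
          rcases Finset.mem_insert.1 hc' with rfl | h
          · exact absurd rfl hne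
          · exact hcmax c' h hne⟩
      rcases lexLt_trichotomy hac with h | h
      · refine ⟨c, Finset.mem_insert_of_mem hcS, fun c' hc' hne => ?_⟩
        rcases Finset.mem_insert.1 hc' with rfl | hmem
        · exact h
        · exact hcmax c' hmem hne
      · refine ⟨a, Finset.mem_insert_self a _, fun c' hc' hne => ?_⟩
        rcases Finset.mem_insert.1 hc' with rfl | hmem
        · exact absurd rfl hne
        · by_cases hc'c : c' = c
          · subst hc'c; exact h
          · exact lexLt_trans (hcmax c' hmem hc'c) h

lemma lexLt_add {c h : Fin d → ℤ} (hh : lexLt h 0) : lexLt (c + h) c := by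
  obtain ⟨i, h1, h2⟩ := hh
  refine ⟨i, ?_, fun j hj => ?_⟩
  · have : h i < 0 := h1
    simp only [Pi.add_apply]; linarith
  · have : h j = 0 := h2 j hj
    simp only [Pi.add_apply, this, add_zero]

lemma mem_add_singleton {Λ : Finset (LatZ d)} {g v : LatZ d} :
    v ∈ Λ + ({g} : Finset (LatZ d)) ↔ ∃ u ∈ Λ, u + g = v := by
  constructor
  · intro hv
    exact ⟨v - g, mem_add_singleton_sub hv, sub_add_cancel v g⟩
  · rintro ⟨u, hu, rfl⟩
    exact mem_add_singleton_self hu g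

/-- If `B, B' ⊆ A` and `latt e c ≠ latt e c'`, then `B + {latt e c}` and
`B' + {latt e c'}` are disjoint. -/
lemma tiling_sep {A : Finset (LatZ d)} {e : Fin d → LatZ d} (htile : IsTiling A e)
    {B B' : Finset (LatZ d)} (hB : B ⊆ A) (hB' : B' ⊆ A) {c c' : Fin d → ℤ}
    (h : latt e c ≠ latt e c') :
    Disjoint (B + ({latt e c} : Finset (LatZ d))) (B' + ({latt e c'} : Finset (LatZ d))) := by
  rw [Finset.disjoint_left]
  intro x hx hx'
  rcases mem_add_singleton.1 hx with ⟨b, hb, rfl⟩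
  rcases mem_add_singleton.1 hx' with ⟨b', hb', hbb⟩
  have h1 : b + latt e c ∈ A.image (· + latt e c) :=
    Finset.mem_image_of_mem _ (hB hb)
  have h2 : b + latt e c ∈ A.image (· + latt e c') := by
    rw [← hbb]
    exact Finset.mem_image_of_mem _ (hB' hb')
  exact Finset.disjoint_left.1 (htile.disj c c' h) h1 h2

end Lemmas6
section Lemmas7
variable {d : ℕ} {𝒜 : Type*} [Fintype 𝒜] [MeasurableSpace 𝒜] [MeasurableSingletonClass 𝒜]

lemma condEnt_chain (μ : Measure (LatZ d → 𝒜)) [IsProbabilityMeasure μ]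
    (C : Finset (LatZ d)) (F : (Fin d → ℤ) → Finset (LatZ d)) (w : (Fin d → ℤ) → ℝ)
    (S₀ : Finset (Fin d → ℤ))
    (H : ∀ S : Finset (Fin d → ℤ), S ⊆ S₀ →
      (∀ c ∈ S, ∀ c' ∈ S₀, lexLt c' c → c' ∈ S) →
      ∀ c ∈ S, (∀ c' ∈ S, c' ≠ c → lexLt c' c) →
      condEnt μ (F c) (C ∪ (S.erase c).biUnion F) ≤ w c) :
    ∀ S : Finset (Fin d → ℤ), S ⊆ S₀ → (∀ c ∈ S, ∀ c' ∈ S₀, lexLt c' c → c' ∈ S) →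
      condEnt μ (S.biUnion F) C ≤ ∑ c ∈ S, w c := by
  classical
  intro S
  induction S using Finset.strongInduction with
  | _ S ih =>
    intro hsub hdc
    rcases S.eq_empty_or_nonempty with rfl | hne
    · simp [condEnt_empty]
    · obtain ⟨c, hcS, hmax⟩ := exists_lexLt_max S hne
      have hSsplit : S.biUnion F = (S.erase c).biUnion F ∪ F c := by
        conv_lhs => rw [← Finset.insert_erase hcS]
        rw [Finset.biUnion_insert, Finset.union_comm]
      rw [hSsplit, condEnt_union]
      have hsub' : S.erase c ⊆ S₀ := (Finset.erase_subset _ _).trans hsub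
      have hdc' : ∀ a ∈ S.erase c, ∀ c' ∈ S₀, lexLt c' a → c' ∈ S.erase c := by
        intro a ha c' hc' hlt
        have haS := Finset.mem_of_mem_erase ha
        refine Finset.mem_erase.2 ⟨?_, hdc a haS c' hc' hlt⟩
        rintro rfl
        exact lexLt_asymm hlt (hmax a haS (Finset.mem_erase.1 ha).1)
      have h1 := ih (S.erase c) (Finset.erase_ssubset hcS) hsub' hdc'
      have h2 := H S hsub hdc c hcS hmax
      have hsum : ∑ x ∈ S, w x = ∑ x ∈ S.erase c, w x + w c := by
        conv_lhs => rw [← Finset.insert_erase hcS]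
        rw [Finset.sum_insert (Finset.notMem_erase c S)]; ring
      rw [hsum]
      linarith

end Lemmas7
open Classical in
/-- upper bound. For a translation invariant `μ`, a tiling `(A, G)`, a
partition of `A`, each `k`, and integers `n > N' ≥ 1`:
`S(A_k + G_n | A_{<k} + G_n) ≤ (|G_n| − |G_{n−N'}|)·|A_k|·log|𝒜|
  + |G_{n−N'}|·S(A_k | (A_k + G_{N'}^-) ∪ (A_{<k} + G_{N'}))`. -/
theorem block_condEnt_upper_bound {d : ℕ} {𝒜 : Type*} [Fintype 𝒜] [Nonempty 𝒜]
    [MeasurableSpace 𝒜] [MeasurableSingletonClass 𝒜]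
    (μ : Measure (LatZ d → 𝒜)) [IsProbabilityMeasure μ] (hinv : TransInv μ)
    (A : Finset (LatZ d)) (e : Fin d → LatZ d) (htile : IsTiling A e)
    (N : ℕ) (parts : Fin N → Finset (LatZ d))
    (hne : ∀ k, (parts k).Nonempty)
    (hdisj : ∀ k l, k ≠ l → Disjoint (parts k) (parts l))
    (hunion : Finset.univ.biUnion parts = A)
    (k : Fin N) (n N' : ℕ) (hN' : 1 ≤ N') (hn : N' < n) :
    condEnt μ (parts k + GboxF e n) ((Finset.Iio k).biUnion parts + GboxF e n) ≤
      (((GboxF e n).card : ℝ) - ((GboxF e (n - N')).card : ℝ)) * ((parts k).card : ℝ) *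
          Real.log (Fintype.card 𝒜) +
        ((GboxF e (n - N')).card : ℝ) *
          condEnt μ (parts k)
            ((parts k + (GboxF e N').filter (fun h => h ∈ Gneg e)) ∪
              ((Finset.Iio k).biUnion parts + GboxF e N')) := by
  classical
  set B := parts k with hB
  set A' := (Finset.Iio k).biUnion parts with hA'
  set C := A' + GboxF e n with hCdef
  set D := (B + (GboxF e N').filter (fun h => h ∈ Gneg e)) ∪ (A' + GboxF e N') with hDdef
  set t := condEnt μ B D with ht
  set bnd := (B.card : ℝ) * Real.log (Fintype.card 𝒜) with hbnd
  have hinje : Function.Injective (latt e) := latt_inj htile.indep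
  have hBA : B ⊆ A := by
    rw [← hunion, hB]; exact Finset.subset_biUnion_of_mem parts (Finset.mem_univ k)
  have hA'A : A' ⊆ A := by
    rw [← hunion, hA']
    intro x hx
    rcases Finset.mem_biUnion.1 hx with ⟨l, hl, hxl⟩
    exact Finset.mem_biUnion.2 ⟨l, Finset.mem_univ l, hxl⟩
  have hBA' : Disjoint B A' := by
    rw [Finset.disjoint_left]
    intro x hx hx'
    rcases Finset.mem_biUnion.1 hx' with ⟨l, hl, hxl⟩
    have hlk : l ≠ k := ne_of_lt (Finset.mem_Iio.1 hl)
    exact Finset.disjoint_left.1 (hdisj k l (Ne.symm hlk)) hx hxl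
  have hN'n : N' ≤ n := hn.le
  set F : (Fin d → ℤ) → Finset (LatZ d) :=
    fun c => B + ({latt e c} : Finset (LatZ d)) with hF
  set w : (Fin d → ℤ) → ℝ :=
    fun c => if c ∈ Vbox d (n - N') then t else bnd with hw
  -- identification of the union
  have hbiUnion : (Vbox d n).biUnion F = B + GboxF e n := by
    ext v
    rw [Finset.mem_biUnion]
    constructor
    · rintro ⟨c, hc, hv⟩
      rcases mem_add_singleton.1 hv with ⟨b, hb, rfl⟩
      exact Finset.mem_add.2 ⟨b, hb, latt e c, Finset.mem_image_of_mem _ hc, rfl⟩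
    · intro hv
      rcases Finset.mem_add.1 hv with ⟨b, hb, h, hh, rfl⟩
      rcases Finset.mem_image.1 hh with ⟨c, hc, rfl⟩
      exact ⟨c, hc, mem_add_singleton.2 ⟨b, hb, rfl⟩⟩
  -- the key per-site bound
  have Hkey : ∀ S : Finset (Fin d → ℤ), S ⊆ Vbox d n →
      (∀ c ∈ S, ∀ c' ∈ Vbox d n, lexLt c' c → c' ∈ S) →
      ∀ c ∈ S, (∀ c' ∈ S, c' ≠ c → lexLt c' c) →
      condEnt μ (F c) (C ∪ (S.erase c).biUnion F) ≤ w c := by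
    intro S hsub hdc c hcS hmax
    set g := latt e c with hg
    set Λ'' := C ∪ (S.erase c).biUnion F with hΛ''
    -- disjointness of F c from Λ''
    have hdisj2 : Disjoint (F c) Λ'' := by
      rw [Finset.disjoint_left]
      intro x hx hx'
      rcases Finset.mem_union.1 hx' with hxC | hxU
      · rcases Finset.mem_add.1 hxC with ⟨a', ha', h, hh, rfl⟩
        rcases Finset.mem_image.1 hh with ⟨c'', hc'', rfl⟩
        rcases mem_add_singleton.1 hx with ⟨b, hb, hbeq⟩
        by_cases hgg : latt e c'' = g
        · rw [hgg] at hbeq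
          have hba : b = a' := add_right_cancel hbeq
          exact Finset.disjoint_left.1 hBA' hb (hba ▸ ha')
        · exact Finset.disjoint_left.1 (tiling_sep htile hA'A hBA hgg)
            (mem_add_singleton.2 ⟨a', ha', rfl⟩) hx
      · rcases Finset.mem_biUnion.1 hxU with ⟨c', hc', hxc'⟩
        have hce : c' ≠ c := (Finset.mem_erase.1 hc').1
        have hneq : latt e c' ≠ latt e c := fun hcontra => hce (hinje hcontra)
        exact Finset.disjoint_left.1 (tiling_sep htile hBA hBA hneq) hxc' hx
    by_cases hin : c ∈ Vbox d (n - N')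
    · -- interior case
      have hDg : D + ({g} : Finset (LatZ d)) ⊆ Λ'' := by
        intro x hx
        rcases mem_add_singleton.1 hx with ⟨u, hu, rfl⟩
        rcases Finset.mem_union.1 hu with huB | huA
        · -- u ∈ B + filtered Gneg box
          rcases Finset.mem_add.1 huB with ⟨b, hb, h, hh, rfl⟩
          rcases Finset.mem_filter.1 hh with ⟨hhbox, hhneg⟩
          rcases Finset.mem_image.1 hhbox with ⟨ch, hch, rfl⟩
          rcases hhneg with ⟨cneg, hcneg, hceq⟩
          have hcc : cneg = ch := hinje hceq.symm
          rw [hcc] at hcneg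
          set c2 : Fin d → ℤ := c + ch with hc2
          have hc2box : c2 ∈ Vbox d n := Vbox_add hN'n hin hch
          have hc2lt : lexLt c2 c := lexLt_add hcneg
          have hc2S : c2 ∈ S := hdc c hcS c2 hc2box hc2lt
          have hc2er : c2 ∈ S.erase c := Finset.mem_erase.2 ⟨lexLt_ne hc2lt, hc2S⟩
          apply Finset.mem_union_right
          apply Finset.mem_biUnion.2
          refine ⟨c2, hc2er, ?_⟩
          apply mem_add_singleton.2
          refine ⟨b, hb, ?_⟩
          show b + latt e c2 = b + latt e ch + g
          rw [hc2, latt_add, hg]; ring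
        · -- u ∈ A' + GboxF e N'
          rcases Finset.mem_add.1 huA with ⟨a', ha', h, hh, rfl⟩
          rcases Finset.mem_image.1 hh with ⟨ch, hch, rfl⟩
          apply Finset.mem_union_left
          rw [hCdef]
          apply Finset.mem_add.2
          refine ⟨a', ha', latt e ch + g, ?_, by ring⟩
          have hrw : latt e ch + g = latt e (c + ch) := by
            rw [latt_add, hg]; ring
          rw [hrw]
          exact Finset.mem_image_of_mem _ (Vbox_add hN'n hin hch)
      calc condEnt μ (F c) Λ'' ≤ condEnt μ (F c) (D + ({g} : Finset (LatZ d))) :=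
            condEnt_mono μ hDg hdisj2
        _ = condEnt μ B D := condEnt_shift μ hinv B D g
        _ = w c := by rw [hw]; simp [hin, ht]
    · -- boundary case
      have hcard : (F c).card = B.card := by
        show (B + ({g} : Finset (LatZ d))).card = B.card
        rw [Finset.add_singleton]
        exact Finset.card_image_of_injective _ (add_left_injective g)
      calc condEnt μ (F c) Λ'' ≤ ((F c).card : ℝ) * Real.log (Fintype.card 𝒜) :=
            condEnt_le_card μ (F c) Λ''
        _ = bnd := by rw [hcard, hbnd]
        _ = w c := by rw [hw]; simp [hin]
  -- apply the chain lemma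
  have hchain := condEnt_chain μ C F w (Vbox d n) Hkey (Vbox d n) (le_refl _)
    (fun c hc c' hc' _ => hc')
  rw [hbiUnion] at hchain
  -- compute the sum of weights
  have hsumw : ∑ c ∈ Vbox d n, w c = ((Vbox d (n - N')).card : ℝ) * t
      + (((Vbox d n).card : ℝ) - ((Vbox d (n - N')).card : ℝ)) * bnd := by
    rw [hw]
    rw [Finset.sum_ite]
    have hfil1 : (Vbox d n).filter (fun c => c ∈ Vbox d (n - N')) = Vbox d (n - N') := by
      rw [Finset.filter_mem_eq_inter]
      exact Finset.inter_eq_right.2 (Vbox_mono (Nat.sub_le n N'))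
    have hfil2 : ((Vbox d n).filter (fun c => c ∉ Vbox d (n - N'))).card
        = (Vbox d n).card - (Vbox d (n - N')).card := by
      have heq2 : (Vbox d n).filter (fun c => ¬ c ∈ Vbox d (n - N'))
          = Vbox d n \ (Vbox d n).filter (fun c => c ∈ Vbox d (n - N')) := by
        rw [← Finset.filter_not]
      rw [heq2, Finset.card_sdiff_of_subset (Finset.filter_subset _ _), hfil1]
    rw [Finset.sum_const, Finset.sum_const, hfil1, hfil2]
    have hle : (Vbox d (n - N')).card ≤ (Vbox d n).card :=
      Finset.card_le_card (Vbox_mono (Nat.sub_le n N'))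
    rw [nsmul_eq_mul, nsmul_eq_mul, Nat.cast_sub hle]
  -- card identities
  have hcard1 : ((GboxF e n).card : ℝ) = ((Vbox d n).card : ℝ) := by
    rw [GboxF, Finset.card_image_of_injective _ hinje]
  have hcard2 : ((GboxF e (n - N')).card : ℝ) = ((Vbox d (n - N')).card : ℝ) := by
    rw [GboxF, Finset.card_image_of_injective _ hinje]
  rw [hsumw] at hchain
  rw [hcard1, hcard2]
  calc condEnt μ (B + GboxF e n) C
      ≤ ((Vbox d (n - N')).card : ℝ) * t
        + (((Vbox d n).card : ℝ) - ((Vbox d (n - N')).card : ℝ)) * bnd := hchain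
    _ = (((Vbox d n).card : ℝ) - ((Vbox d (n - N')).card : ℝ)) * (B.card : ℝ)
          * Real.log (Fintype.card 𝒜)
        + ((Vbox d (n - N')).card : ℝ) * t := by rw [hbnd]; ring
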